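/- Let K be a field of characteristic 2, let σ be a ring endomorphism of K with σ(σ(x)) = x² for all x ∈ K (a Tits endomorphism), and let ν : K → ℝ ∪ {∞} be a valuation satisfying ν(σ(x)) = √2 · ν(x) for all x ∈ K. Define ω(t, u) := ν(σ(t)·t² + u·t + σ(u)) for (t,u) ∈ K × K. Then for all t, u ∈ K and every nonzero k ∈ K, ω(t·σ(k)·k^{−1}, u·k) = ω(t, u) + √2 · ν(k). -/

import Mathlib

/-- Let `K` be a field of characteristic 2 with a Tits endomorphism `σ`
(so `σ (σ x) = x²`) and a valuation `ν` satisfying `ν (σ x) = √2 · ν x`. With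
`ω (t, u) := ν (σ t · t² + u · t + σ u)`, the action `(t,u) ⊙ k = (t·σ(k)·k⁻¹, u·k)` of
`k ∈ K×` satisfies `ω ((t,u) ⊙ k) = ω (t,u) + √2 · ν k`. -/
theorem octagon_omega_smul {K : Type*} [Field K] [CharP K 2]
    (σ : K →+* K) (hσ : ∀ x : K, σ (σ x) = x ^ 2)
    (ν : K → WithTop ℝ)
    (hν1 : ∀ x : K, ν x = ⊤ ↔ x = 0)
    (hνmul : ∀ x y : K, ν (x * y) = ν x + ν y)
    (hνadd : ∀ x y : K, min (ν x) (ν y) ≤ ν (x + y))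
    (hνσ : ∀ x : K, ν (σ x) = (↑(Real.sqrt 2) : WithTop ℝ) * ν x) :
    ∀ t u k : K, k ≠ 0 →
      ν (σ (t * σ k * k⁻¹) * (t * σ k * k⁻¹) ^ 2 +
          (u * k) * (t * σ k * k⁻¹) + σ (u * k)) =
        ν (σ t * t ^ 2 + u * t + σ u) + (↑(Real.sqrt 2) : WithTop ℝ) * ν k := by
  intro t u k hk
  have hσk : σ k ≠ 0 := (map_ne_zero σ).mpr hk
  have key : σ (t * σ k * k⁻¹) * (t * σ k * k⁻¹) ^ 2 +
      (u * k) * (t * σ k * k⁻¹) + σ (u * k) =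
      (σ t * t ^ 2 + u * t + σ u) * σ k := by
    have h1 : σ (t * σ k * k⁻¹) = σ t * k ^ 2 * (σ k)⁻¹ := by
      rw [map_mul, map_mul, hσ, map_inv₀]
    rw [h1, map_mul]
    field_simp
  rw [key, hνmul, hνσ]
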